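/- arXiv:2602.06858 — 8 statements merged into one kernel-verified Lean document; each statement's English description precedes it below -/
import Mathlib

section
/- The RoBoS-NN loss is bounded: for every real u, 0 ≤ L(u) < λ. -/
noncomputable def robos (a lam eps : ℝ) (u : ℝ) : ℝ :=
  lam * (1 - (a * Real.sqrt (u ^ 2 + eps) - a * Real.sqrt eps + 1) *
    Real.exp (-(a * Real.sqrt (u ^ 2 + eps) - a * Real.sqrt eps)))

theorem robos_bounded (a lam eps : ℝ) (ha : 0 < a) (hlam : 0 < lam) (heps : 0 < eps) :
    ∀ u : ℝ, 0 ≤ robos a lam eps u ∧ robos a lam eps u < lam := by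
  intro u
  set t : ℝ := a * Real.sqrt (u ^ 2 + eps) - a * Real.sqrt eps with ht
  have ht0 : 0 ≤ t := by
    have : Real.sqrt eps ≤ Real.sqrt (u ^ 2 + eps) :=
      Real.sqrt_le_sqrt (by nlinarith [sq_nonneg u])
    nlinarith
  have hle : (t + 1) * Real.exp (-t) ≤ 1 := by
    rw [Real.exp_neg]
    rw [mul_inv_le_iff₀ (Real.exp_pos t), one_mul]
    linarith [Real.add_one_le_exp t]
  have hpos : 0 < (t + 1) * Real.exp (-t) :=
    mul_pos (by linarith) (Real.exp_pos _)
  constructor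
  · have : 0 ≤ 1 - (t + 1) * Real.exp (-t) := by linarith
    exact mul_nonneg hlam.le this
  · have : 1 - (t + 1) * Real.exp (-t) < 1 := by linarith
    calc lam * (1 - (t + 1) * Real.exp (-t)) < lam * 1 := by
          exact mul_lt_mul_of_pos_left this hlam
      _ = lam := mul_one lam
end

section
/- The RoBoS-NN loss saturates at its bound parameter: L(u) tends to λ as u → +∞, and L(u) tends to λ as u → −∞. -/
open Filter Real

lemma sqrt_tendsto_atTop : Tendsto Real.sqrt atTop atTop := by
  refine tendsto_atTop_atTop.2 fun b => ⟨b ^ 2, fun x hx => ?_⟩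
  calc b ≤ |b| := le_abs_self b
    _ = Real.sqrt (b ^ 2) := (Real.sqrt_sq_eq_abs b).symm
    _ ≤ Real.sqrt x := Real.sqrt_le_sqrt hx

lemma aux_tendsto_zero : Tendsto (fun x : ℝ => (x + 1) * Real.exp (-x)) atTop (nhds 0) := by
  have h1 : Tendsto (fun x : ℝ => x ^ 1 * Real.exp (-x)) atTop (nhds 0) :=
    Real.tendsto_pow_mul_exp_neg_atTop_nhds_zero 1
  have h2 : Tendsto (fun x : ℝ => Real.exp (-x)) atTop (nhds 0) :=
    Real.tendsto_exp_neg_atTop_nhds_zero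
  have := h1.add h2
  simp only [pow_one, add_zero] at this
  convert this using 2 with x
  ring

lemma aux_comp {f : ℝ → ℝ} {l : Filter ℝ} (hf : Tendsto f l atTop) :
    Tendsto (fun u => (f u + 1) * Real.exp (-f u)) l (nhds 0) :=
  aux_tendsto_zero.comp hf

theorem robos_saturates (a lam eps : ℝ) (ha : 0 < a) (hlam : 0 < lam) (heps : 0 < eps) :
    Filter.Tendsto (robos a lam eps) Filter.atTop (nhds lam) ∧
    Filter.Tendsto (robos a lam eps) Filter.atBot (nhds lam) := by
  have key : ∀ l : Filter ℝ, Tendsto (fun u : ℝ => u ^ 2) l atTop →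
      Tendsto (robos a lam eps) l (nhds lam) := by
    intro l hl
    have hg : Tendsto (fun u : ℝ => a * Real.sqrt (u ^ 2 + eps) - a * Real.sqrt eps) l atTop := by
      apply tendsto_atTop_add_const_right
      apply Tendsto.const_mul_atTop ha
      exact sqrt_tendsto_atTop.comp (tendsto_atTop_add_const_right _ eps hl)
    have h0 := aux_comp hg
    have : Tendsto (fun u : ℝ => lam * (1 - (a * Real.sqrt (u ^ 2 + eps) - a * Real.sqrt eps + 1) *
        Real.exp (-(a * Real.sqrt (u ^ 2 + eps) - a * Real.sqrt eps)))) l (nhds (lam * (1 - 0))) :=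
      (tendsto_const_nhds.sub h0).const_mul lam
    simp only [sub_zero, mul_one] at this
    exact this
  constructor
  · exact key _ (tendsto_pow_atTop (by norm_num : (2:ℕ) ≠ 0))
  · refine key _ ?_
    have h1 : Tendsto (fun u : ℝ => -u) atBot atTop := tendsto_neg_atBot_atTop
    have h2 : Tendsto (fun x : ℝ => x ^ 2) atTop atTop :=
      tendsto_pow_atTop (by norm_num : (2:ℕ) ≠ 0)
    have h3 := h2.comp h1
    have h4 : ((fun x : ℝ => x ^ 2) ∘ fun u => -u) = fun u : ℝ => u ^ 2 := by
      funext u; simp [Function.comp]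
    rwa [h4] at h3
end

section
/- The derivative of the RoBoS-NN loss is uniformly bounded: for every real u, |L′(u)| ≤ λ·a/e, where e is Euler's number and L′ denotes the derivative of L. -/
lemma robos_hasDerivAt (a lam eps : ℝ) (heps : 0 < eps) (u : ℝ) :
    HasDerivAt (robos a lam eps)
      (lam * ((a * Real.sqrt (u ^ 2 + eps) - a * Real.sqrt eps) *
        Real.exp (-(a * Real.sqrt (u ^ 2 + eps) - a * Real.sqrt eps))) *
        (a * u / Real.sqrt (u ^ 2 + eps))) u := by
  have hpos : (0:ℝ) < u ^ 2 + eps := by positivity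
  have hspos : 0 < Real.sqrt (u ^ 2 + eps) := Real.sqrt_pos.mpr hpos
  set s := Real.sqrt (u ^ 2 + eps) with hs
  have h1 : HasDerivAt (fun x : ℝ => x ^ 2 + eps) (2 * u) u := by
    simpa using (hasDerivAt_pow 2 u).add_const eps
  have h2 : HasDerivAt (fun x : ℝ => Real.sqrt (x ^ 2 + eps)) (2 * u / (2 * s)) u :=
    h1.sqrt (ne_of_gt hpos)
  have h3 : HasDerivAt (fun x : ℝ => a * Real.sqrt (x ^ 2 + eps) - a * Real.sqrt eps)
      (a * (2 * u / (2 * s))) u := (h2.const_mul a).sub_const _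
  have h4 : HasDerivAt (fun x : ℝ => Real.exp (-(a * Real.sqrt (x ^ 2 + eps) - a * Real.sqrt eps)))
      (Real.exp (-(a * s - a * Real.sqrt eps)) * (-(a * (2 * u / (2 * s))))) u := h3.neg.exp
  have h5 := ((h3.add_const 1).mul h4).const_sub 1
  have h6 := h5.const_mul lam
  have heq : robos a lam eps = fun x : ℝ => lam * (1 -
      (a * Real.sqrt (x ^ 2 + eps) - a * Real.sqrt eps + 1) *
      Real.exp (-(a * Real.sqrt (x ^ 2 + eps) - a * Real.sqrt eps))) := rfl
  rw [heq]
  refine h6.congr_deriv ?_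
  rw [← hs]
  field_simp
  ring

theorem robos_deriv_bounded (a lam eps : ℝ) (ha : 0 < a) (hlam : 0 < lam) (heps : 0 < eps) :
    ∀ u : ℝ, |deriv (robos a lam eps) u| ≤ lam * a / Real.exp 1 := by
  intro u
  have hpos : (0:ℝ) < u ^ 2 + eps := by positivity
  have hspos : 0 < Real.sqrt (u ^ 2 + eps) := Real.sqrt_pos.mpr hpos
  set s := Real.sqrt (u ^ 2 + eps) with hs
  set g := a * s - a * Real.sqrt eps with hgdef
  rw [(robos_hasDerivAt a lam eps heps u).deriv]
  have hg0 : 0 ≤ g := by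
    have : Real.sqrt eps ≤ s := Real.sqrt_le_sqrt (by nlinarith)
    have := mul_le_mul_of_nonneg_left this ha.le
    simpa [hgdef] using by linarith
  -- g * exp (-g) ≤ exp (-1)
  have hkey : g * Real.exp (-g) ≤ Real.exp (-1) := by
    have h1 : g ≤ Real.exp (g - 1) := by
      have := Real.add_one_le_exp (g - 1)
      linarith
    calc g * Real.exp (-g) ≤ Real.exp (g - 1) * Real.exp (-g) :=
          mul_le_mul_of_nonneg_right h1 (Real.exp_pos _).le
      _ = Real.exp (-1) := by rw [← Real.exp_add]; ring_nf
  have hge0 : 0 ≤ g * Real.exp (-g) := mul_nonneg hg0 (Real.exp_pos _).le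
  -- |u| ≤ s
  have hus : |u| ≤ s := by
    rw [hs, ← Real.sqrt_sq_eq_abs]
    exact Real.sqrt_le_sqrt (by nlinarith)
  have habs : |a * u / s| ≤ a := by
    rw [abs_div, abs_mul, abs_of_pos ha, abs_of_pos hspos, div_le_iff₀ hspos]
    calc a * |u| ≤ a * s := mul_le_mul_of_nonneg_left hus ha.le
      _ = a * s := rfl
  calc |lam * (g * Real.exp (-g)) * (a * u / s)|
      = lam * (g * Real.exp (-g)) * |a * u / s| := by
        rw [abs_mul, abs_of_nonneg (mul_nonneg hlam.le hge0)]
    _ ≤ lam * Real.exp (-1) * a := by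
        have h1 : lam * (g * Real.exp (-g)) ≤ lam * Real.exp (-1) :=
          mul_le_mul_of_nonneg_left hkey hlam.le
        exact mul_le_mul h1 habs (abs_nonneg _) (by positivity)
    _ = lam * a / Real.exp 1 := by
        rw [Real.exp_neg]
        field_simp
end

section
/- The RoBoS-NN loss is globally Lipschitz continuous with Lipschitz constant λ·a/e: for all real u, v, |L(u) − L(v)| ≤ (λ·a/e)·|u − v|, where e is Euler's number. -/
theorem robos_lipschitz (a lam eps : ℝ) (ha : 0 < a) (hlam : 0 < lam) (heps : 0 < eps) :
    ∀ u v : ℝ, |robos a lam eps u - robos a lam eps v| ≤ (lam * a / Real.exp 1) * |u - v| := by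
  intro u v
  set f : ℝ → ℝ := robos a lam eps with hf
  set f' : ℝ → ℝ := fun x =>
    lam * -((a * ((2 * x) / (2 * Real.sqrt (x ^ 2 + eps)))) *
        Real.exp (-(a * Real.sqrt (x ^ 2 + eps) - a * Real.sqrt eps)) +
      (a * Real.sqrt (x ^ 2 + eps) - a * Real.sqrt eps + 1) *
        (-(a * ((2 * x) / (2 * Real.sqrt (x ^ 2 + eps)))) *
          Real.exp (-(a * Real.sqrt (x ^ 2 + eps) - a * Real.sqrt eps)))) with hf'
  have hd : ∀ x : ℝ, HasDerivAt f (f' x) x := by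
    intro x
    have hpos : (0:ℝ) < x ^ 2 + eps := by positivity
    have h1 : HasDerivAt (fun u : ℝ => u ^ 2 + eps) (2 * x) x := by
      have := (hasDerivAt_pow 2 x).add_const eps
      simpa using this
    have hs : HasDerivAt (fun u : ℝ => Real.sqrt (u ^ 2 + eps))
        ((2 * x) / (2 * Real.sqrt (x ^ 2 + eps))) x := h1.sqrt (ne_of_gt hpos)
    have ht : HasDerivAt (fun u : ℝ => a * Real.sqrt (u ^ 2 + eps) - a * Real.sqrt eps)
        (a * ((2 * x) / (2 * Real.sqrt (x ^ 2 + eps)))) x := (hs.const_mul a).sub_const _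
    have hexp := ht.neg.exp
    have hP := (ht.add_const 1).mul hexp
    have h2 := (hP.const_sub 1).const_mul lam
    have heq : f = fun u : ℝ =>
        lam * (1 - (a * Real.sqrt (u ^ 2 + eps) - a * Real.sqrt eps + 1) *
          Real.exp (-(a * Real.sqrt (u ^ 2 + eps) - a * Real.sqrt eps))) := rfl
    rw [heq, hf']
    refine h2.congr_deriv ?_
    simp only [Pi.neg_apply]
    ring
  have key : ∀ x : ℝ, ‖f' x‖ ≤ lam * a / Real.exp 1 := by
    intro x
    have hpos : (0:ℝ) < x ^ 2 + eps := by positivity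
    set S := Real.sqrt (x ^ 2 + eps) with hS
    have hSpos : 0 < S := Real.sqrt_pos.mpr hpos
    set T := a * S - a * Real.sqrt eps with hT
    have hT0 : 0 ≤ T := by
      have : Real.sqrt eps ≤ S := Real.sqrt_le_sqrt (by nlinarith)
      have := mul_le_mul_of_nonneg_left this ha.le
      simp [hT]; linarith
    set D := a * ((2 * x) / (2 * S)) with hD
    have hDle : |D| ≤ a := by
      have hx : |x| ≤ S := by
        have : Real.sqrt (x ^ 2) ≤ S := Real.sqrt_le_sqrt (by linarith)
        simpa [Real.sqrt_sq_eq_abs] using this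
      have hD2 : D = a * (x / S) := by
        rw [hD, mul_div_mul_left x S two_ne_zero]
      have : |D| = a * (|x| / S) := by
        rw [hD2, abs_mul, abs_of_pos ha, abs_div, abs_of_pos hSpos]
      rw [this]
      have : |x| / S ≤ 1 := by
        rw [div_le_one hSpos]; exact hx
      nlinarith
    have hTE : T * Real.exp (-T) ≤ Real.exp (-1) := by
      have h1 : T ≤ Real.exp (T - 1) := by
        have := Real.add_one_le_exp (T - 1)
        linarith
      have h2 : Real.exp (T - 1) * Real.exp (-T) = Real.exp (-1) := by
        rw [← Real.exp_add]; ring_nf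
      calc T * Real.exp (-T) ≤ Real.exp (T - 1) * Real.exp (-T) :=
            mul_le_mul_of_nonneg_right h1 (Real.exp_pos _).le
        _ = Real.exp (-1) := h2
    have hval : f' x = lam * (T * Real.exp (-T)) * D := by
      rw [hf', hT, hD, hS]; ring
    rw [hval]
    rw [Real.norm_eq_abs, abs_mul, abs_mul, abs_of_pos hlam,
      abs_of_nonneg (mul_nonneg hT0 (Real.exp_pos _).le)]
    have hEexp : Real.exp (-1) = 1 / Real.exp 1 := by
      rw [Real.exp_neg]; simp [div_eq_mul_inv]
    have h1 : lam * (T * Real.exp (-T)) * |D| ≤ lam * Real.exp (-1) * a := by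
      have hb : T * Real.exp (-T) ≥ 0 := mul_nonneg hT0 (Real.exp_pos _).le
      have := mul_le_mul hTE hDle (abs_nonneg _) (Real.exp_pos _).le
      nlinarith
    calc lam * (T * Real.exp (-T)) * |D| ≤ lam * Real.exp (-1) * a := h1
      _ = lam * a / Real.exp 1 := by rw [hEexp]; ring
  have hconv : Convex ℝ (Set.univ : Set ℝ) := convex_univ
  have := hconv.norm_image_sub_le_of_norm_hasDerivWithin_le
    (fun x _ => (hd x).hasDerivWithinAt) (fun x _ => key x)
    (Set.mem_univ v) (Set.mem_univ u)
  simpa [Real.norm_eq_abs] using this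
end

section
/- The RoBoS-NN loss is redescending: its derivative L′(u) tends to 0 as u → +∞ and tends to 0 as u → −∞, so the influence of arbitrarily large residuals (outliers) on the gradient vanishes. -/
open Real Filter

theorem robos_redescending (a lam eps : ℝ) (ha : 0 < a) (hlam : 0 < lam) (heps : 0 < eps) :
    Filter.Tendsto (deriv (robos a lam eps)) Filter.atTop (nhds 0) ∧
    Filter.Tendsto (deriv (robos a lam eps)) Filter.atBot (nhds 0) := by
  set g : ℝ → ℝ := fun u => a * Real.sqrt (u ^ 2 + eps) - a * Real.sqrt eps with hgdef
  have hsqpos : ∀ u : ℝ, (0:ℝ) < Real.sqrt (u ^ 2 + eps) := by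
    intro u; apply Real.sqrt_pos.2; positivity
  have hsq : ∀ u : ℝ, HasDerivAt (fun u : ℝ => Real.sqrt (u ^ 2 + eps))
      (u / Real.sqrt (u ^ 2 + eps)) u := by
    intro u
    have h1 : HasDerivAt (fun u : ℝ => u ^ 2 + eps) (2 * u) u := by
      simpa using (hasDerivAt_pow 2 u).add_const eps
    have h2 : (u ^ 2 + eps) ≠ 0 := by positivity
    have := (Real.hasDerivAt_sqrt h2).comp u h1
    refine this.congr_deriv ?_
    have := (hsqpos u).ne'
    field_simp
  have hg' : ∀ u : ℝ, HasDerivAt g (a * (u / Real.sqrt (u ^ 2 + eps))) u := by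
    intro u
    exact ((hsq u).const_mul a).sub_const _
  have hder : ∀ u : ℝ, deriv (robos a lam eps) u
      = lam * a * (u / Real.sqrt (u ^ 2 + eps)) * (g u * Real.exp (-(g u))) := by
    intro u
    have he : HasDerivAt (fun u => Real.exp (-(g u)))
        (Real.exp (-(g u)) * -(a * (u / Real.sqrt (u ^ 2 + eps)))) u :=
      ((hg' u).neg).exp
    have hm : HasDerivAt (fun u => (g u + 1) * Real.exp (-(g u)))
        ((a * (u / Real.sqrt (u ^ 2 + eps))) * Real.exp (-(g u))
          + (g u + 1) * (Real.exp (-(g u)) * -(a * (u / Real.sqrt (u ^ 2 + eps))))) u :=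
      ((hg' u).add_const 1).mul he
    have hr : HasDerivAt (robos a lam eps)
        (lam * (0 - ((a * (u / Real.sqrt (u ^ 2 + eps))) * Real.exp (-(g u))
          + (g u + 1) * (Real.exp (-(g u)) * -(a * (u / Real.sqrt (u ^ 2 + eps))))))) u := by
      exact ((hasDerivAt_const u (1:ℝ)).sub hm).const_mul lam
    rw [hr.deriv]; ring
  have hub : ∀ u : ℝ, u ≤ Real.sqrt (u ^ 2 + eps) := by
    intro u
    calc u ≤ |u| := le_abs_self u
    _ = Real.sqrt (u ^ 2) := by rw [Real.sqrt_sq_eq_abs]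
    _ ≤ Real.sqrt (u ^ 2 + eps) := Real.sqrt_le_sqrt (by linarith)
  have hub' : ∀ u : ℝ, -u ≤ Real.sqrt (u ^ 2 + eps) := by
    intro u
    calc -u ≤ |u| := neg_le_abs u
    _ = Real.sqrt (u ^ 2) := by rw [Real.sqrt_sq_eq_abs]
    _ ≤ Real.sqrt (u ^ 2 + eps) := Real.sqrt_le_sqrt (by linarith)
  have hgTop : Tendsto g atTop atTop := by
    apply tendsto_atTop_mono (f := fun u : ℝ => a * u - a * Real.sqrt eps)
    · intro u
      simp only [hgdef]
      have := hub u
      nlinarith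
    · exact (tendsto_atTop_add_const_right _ _
        ((tendsto_const_mul_atTop_of_pos ha).2 tendsto_id))
  have hgBot : Tendsto g atBot atTop := by
    apply tendsto_atTop_mono (f := fun u : ℝ => a * (-u) - a * Real.sqrt eps)
    · intro u
      simp only [hgdef]
      have := hub' u
      nlinarith
    · apply tendsto_atTop_add_const_right
      exact (tendsto_const_mul_atTop_of_pos ha).2 tendsto_neg_atBot_atTop
  have hxe : Tendsto (fun x : ℝ => x * Real.exp (-x)) atTop (nhds 0) := by
    simpa using Real.tendsto_pow_mul_exp_neg_atTop_nhds_zero 1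
  have hbound : ∀ u : ℝ, ‖deriv (robos a lam eps) u‖
      ≤ (lam * a) * (g u * Real.exp (-(g u))) := by
    intro u
    rw [hder u]
    have hg0 : 0 ≤ g u := by
      simp only [hgdef]
      have : Real.sqrt eps ≤ Real.sqrt (u ^ 2 + eps) := Real.sqrt_le_sqrt (by nlinarith)
      nlinarith
    have hquot : |u / Real.sqrt (u ^ 2 + eps)| ≤ 1 := by
      rw [abs_div, abs_of_pos (hsqpos u)]
      rw [div_le_one (hsqpos u)]
      rcases abs_cases u with ⟨h, _⟩ | ⟨h, _⟩
      · rw [h]; exact hub u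
      · rw [h]; exact hub' u
    have hE : 0 < Real.exp (-(g u)) := Real.exp_pos _
    rw [Real.norm_eq_abs, abs_mul, abs_mul]
    rw [abs_of_pos (by positivity : (0:ℝ) < lam * a),
      abs_of_nonneg (by positivity : (0:ℝ) ≤ g u * Real.exp (-(g u)))]
    have h1 : 0 ≤ g u * Real.exp (-(g u)) := by positivity
    nlinarith [mul_nonneg (mul_nonneg (mul_pos hlam ha).le h1) (sub_nonneg.2 hquot)]
  have hlim : ∀ (l : Filter ℝ), Tendsto g l atTop →
      Tendsto (fun u => (lam * a) * (g u * Real.exp (-(g u)))) l (nhds 0) := by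
    intro l hl
    have : Tendsto (fun u => g u * Real.exp (-(g u))) l (nhds 0) := hxe.comp hl
    simpa using this.const_mul (lam * a)
  exact ⟨squeeze_zero_norm hbound (hlim _ hgTop),
    squeeze_zero_norm hbound (hlim _ hgBot)⟩
end

section
/- The RoBoS-NN loss is strictly increasing on the nonnegative half-line: for all real numbers u, v with 0 ≤ u < v, one has L(u) < L(v). -/
lemma robos_aux : StrictMonoOn (fun t : ℝ => 1 - (t + 1) * Real.exp (-t)) (Set.Ici 0) := by
  apply strictMonoOn_of_deriv_pos (convex_Ici 0)
  · fun_prop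
  · intro t ht
    rw [interior_Ici] at ht
    have h : HasDerivAt (fun t : ℝ => 1 - (t + 1) * Real.exp (-t)) (t * Real.exp (-t)) t := by
      have h1 : HasDerivAt (fun t : ℝ => (t + 1) * Real.exp (-t))
          (1 * Real.exp (-t) + (t + 1) * (Real.exp (-t) * (-1))) t := by
        exact ((hasDerivAt_id t).add_const 1).mul ((Real.hasDerivAt_exp (-t)).comp t
          ((hasDerivAt_id t).neg))
      have h2 : HasDerivAt (fun t : ℝ => 1 - (t + 1) * Real.exp (-t))
          (0 - (1 * Real.exp (-t) + (t + 1) * (Real.exp (-t) * (-1)))) t :=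
        (hasDerivAt_const t (1:ℝ)).sub h1
      convert h2 using 1
      ring
    rw [h.deriv]
    exact mul_pos ht (Real.exp_pos _)

theorem robos_strictMono_nonneg (a lam eps : ℝ) (ha : 0 < a) (hlam : 0 < lam) (heps : 0 < eps) :
    ∀ u v : ℝ, 0 ≤ u → u < v → robos a lam eps u < robos a lam eps v := by
  intro u v hu huv
  have hsq : u ^ 2 < v ^ 2 := by nlinarith
  have hsqrt : Real.sqrt (u ^ 2 + eps) < Real.sqrt (v ^ 2 + eps) :=
    Real.sqrt_lt_sqrt (by positivity) (by linarith)
  have hge : ∀ w : ℝ, 0 ≤ a * Real.sqrt (w ^ 2 + eps) - a * Real.sqrt eps := by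
    intro w
    have : Real.sqrt eps ≤ Real.sqrt (w ^ 2 + eps) :=
      Real.sqrt_le_sqrt (by nlinarith [sq_nonneg w])
    nlinarith
  have ht : a * Real.sqrt (u ^ 2 + eps) - a * Real.sqrt eps <
      a * Real.sqrt (v ^ 2 + eps) - a * Real.sqrt eps := by nlinarith
  have := robos_aux (Set.mem_Ici.mpr (hge u)) (Set.mem_Ici.mpr (hge v)) ht
  unfold robos
  exact mul_lt_mul_of_pos_left this hlam
end

section
/- The RoBoS-NN loss is not a convex function on ℝ: there exist real numbers u, v and t ∈ [0,1] such that L(t·u + (1−t)·v) > t·L(u) + (1−t)·L(v). -/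
lemma robos_lt_lam (a lam eps u : ℝ) (ha : 0 < a) (hlam : 0 < lam) (heps : 0 < eps) :
    robos a lam eps u < lam := by
  unfold robos
  have hs : 0 ≤ a * Real.sqrt (u ^ 2 + eps) - a * Real.sqrt eps := by
    have h1 : Real.sqrt eps ≤ Real.sqrt (u ^ 2 + eps) :=
      Real.sqrt_le_sqrt (by nlinarith [sq_nonneg u])
    nlinarith
  have hpos : 0 < (a * Real.sqrt (u ^ 2 + eps) - a * Real.sqrt eps + 1) *
      Real.exp (-(a * Real.sqrt (u ^ 2 + eps) - a * Real.sqrt eps)) := by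
    positivity
  nlinarith

lemma robos_gt_of_big (a lam eps u : ℝ) (ha : 0 < a) (hlam : 0 < lam) (heps : 0 < eps)
    (hu : Real.sqrt eps + 6 / a ≤ u) (hu0 : 0 ≤ u) :
    lam / 2 < robos a lam eps u := by
  unfold robos
  set s : ℝ := a * Real.sqrt (u ^ 2 + eps) - a * Real.sqrt eps with hsdef
  have hsq : u ≤ Real.sqrt (u ^ 2 + eps) := by
    rw [show u ^ 2 + eps = u * u + eps by ring]
    have := Real.sqrt_le_sqrt (show u * u ≤ u * u + eps by linarith)
    rwa [Real.sqrt_mul_self hu0] at this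
  have hs6 : 6 ≤ s := by
    have h1 : Real.sqrt eps + 6 / a ≤ Real.sqrt (u ^ 2 + eps) := le_trans hu hsq
    have h2 : a * (Real.sqrt eps + 6 / a) ≤ a * Real.sqrt (u ^ 2 + eps) := by
      exact mul_le_mul_of_nonneg_left h1 ha.le
    have h3 : a * (6 / a) = 6 := by field_simp
    rw [hsdef]; nlinarith
  -- exp s ≥ (1 + s/2)^2 > 2(s+1)
  have hexp : (1 + s / 2) ^ 2 ≤ Real.exp s := by
    have h1 : s / 2 + 1 ≤ Real.exp (s / 2) := Real.add_one_le_exp (s / 2)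
    have h2 : Real.exp (s / 2) * Real.exp (s / 2) = Real.exp s := by
      rw [← Real.exp_add]; ring_nf
    have h3 : 0 ≤ 1 + s / 2 := by linarith
    nlinarith [Real.exp_pos (s / 2)]
  have h2s : 2 * (s + 1) < Real.exp s := by nlinarith
  have hkey : (s + 1) * Real.exp (-s) < 1 / 2 := by
    rw [Real.exp_neg]
    have hep : 0 < Real.exp s := Real.exp_pos s
    rw [mul_inv_lt_iff₀ hep]
    nlinarith
  nlinarith [hkey]

theorem robos_not_convex (a lam eps : ℝ) (ha : 0 < a) (hlam : 0 < lam) (heps : 0 < eps) :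
    ∃ u v t : ℝ, 0 ≤ t ∧ t ≤ 1 ∧
      t * robos a lam eps u + (1 - t) * robos a lam eps v <
        robos a lam eps (t * u + (1 - t) * v) := by
  set m : ℝ := Real.sqrt eps + 6 / a with hm
  have hm0 : 0 ≤ m := by positivity
  refine ⟨2 * m, 0, 1/2, by norm_num, by norm_num, ?_⟩
  have hmid : (1/2 : ℝ) * (2 * m) + (1 - 1/2) * 0 = m := by ring
  rw [hmid]
  have h0 : robos a lam eps 0 = 0 := by
    unfold robos
    norm_num
  have h1 := robos_lt_lam a lam eps (2 * m) ha hlam heps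
  have h2 := robos_gt_of_big a lam eps m ha hlam heps (le_refl _) hm0
  rw [h0]
  linarith
end

section
/- The RoBoSS loss is continuously differentiable on all of ℝ (including at u = 0), with derivative L₀′(u) = λ·a²·u·exp(−a·u) for u > 0 and L₀′(u) = 0 for u ≤ 0. -/
noncomputable def roboss (a lam : ℝ) (u : ℝ) : ℝ :=
  if 0 < u then lam * (1 - (a * u + 1) * Real.exp (-(a * u))) else 0

noncomputable def robossDeriv (a lam : ℝ) (u : ℝ) : ℝ :=
  if 0 < u then lam * a ^ 2 * u * Real.exp (-(a * u)) else 0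

lemma g_hasDeriv (a lam u : ℝ) :
    HasDerivAt (fun u => lam * (1 - (a * u + 1) * Real.exp (-(a * u))))
      (lam * a ^ 2 * u * Real.exp (-(a * u))) u := by
  have h1 : HasDerivAt (fun u : ℝ => a * u + 1) a u := by
    simpa using ((hasDerivAt_id u).const_mul a).add_const 1
  have h2 : HasDerivAt (fun u : ℝ => Real.exp (-(a * u)))
      (Real.exp (-(a * u)) * (-a)) u := by
    have : HasDerivAt (fun u : ℝ => -(a * u)) (-a) u := by
      simpa [Pi.neg_def] using ((hasDerivAt_id u).const_mul a).neg
    exact this.exp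
  have h3 : HasDerivAt (fun y : ℝ => (a * y + 1) * Real.exp (-(a * y))) _ u := (h1.mul h2)
  have h4 := ((h3.const_sub 1).const_mul lam)
  refine h4.congr_deriv ?_
  ring

lemma roboss_nonneg_bound (a lam : ℝ) (ha : 0 < a) (hlam : 0 < lam) (u : ℝ) :
    |roboss a lam u| ≤ lam * a ^ 2 * u ^ 2 := by
  unfold roboss
  split_ifs with hu
  · set x := a * u with hx
    have hxpos : 0 < x := mul_pos ha hu
    have hub : 1 - (x + 1) * Real.exp (-x) ≤ x ^ 2 := by
      have h1 : 1 - x ≤ Real.exp (-x) := by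
        have := Real.add_one_le_exp (-x); linarith
      have h2 : (x + 1) * (1 - x) ≤ (x + 1) * Real.exp (-x) :=
        mul_le_mul_of_nonneg_left h1 (by linarith)
      nlinarith
    have hlb : 0 ≤ 1 - (x + 1) * Real.exp (-x) := by
      have h1 : x + 1 ≤ Real.exp x := Real.add_one_le_exp x
      have h2 : (x + 1) * Real.exp (-x) ≤ Real.exp x * Real.exp (-x) :=
        mul_le_mul_of_nonneg_right h1 (Real.exp_pos _).le
      rw [← Real.exp_add] at h2
      simpa using h2
    rw [abs_of_nonneg (by positivity)]
    have : lam * (1 - (x + 1) * Real.exp (-x)) ≤ lam * x ^ 2 :=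
      mul_le_mul_of_nonneg_left hub hlam.le
    calc lam * (1 - (x + 1) * Real.exp (-x)) ≤ lam * x ^ 2 := this
      _ = lam * a ^ 2 * u ^ 2 := by rw [hx]; ring
  · simp; positivity

theorem roboss_contDiffOne (a lam : ℝ) (ha : 0 < a) (hlam : 0 < lam) :
    (∀ u : ℝ, HasDerivAt (roboss a lam) (robossDeriv a lam u) u) ∧
    Continuous (robossDeriv a lam) := by
  constructor
  · intro u
    rcases lt_trichotomy u 0 with hu | hu | hu
    · -- u < 0
      have heq : roboss a lam =ᶠ[nhds u] (fun _ => (0 : ℝ)) := by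
        filter_upwards [Iio_mem_nhds hu] with v hv
        have : v < 0 := hv
        simp [roboss, not_lt.mpr this.le]
      have : robossDeriv a lam u = 0 := by simp [robossDeriv, not_lt.mpr hu.le]
      rw [this]
      exact (hasDerivAt_const u (0:ℝ)).congr_of_eventuallyEq heq
    · -- u = 0
      subst hu
      have h0 : roboss a lam 0 = 0 := by simp [roboss]
      have hd0 : robossDeriv a lam 0 = 0 := by simp [robossDeriv]
      rw [hd0]
      rw [hasDerivAt_iff_isLittleO]
      simp only [h0, sub_zero, smul_zero, mul_zero]
      rw [Asymptotics.isLittleO_iff]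
      intro c hc
      have htend : Filter.Tendsto (fun u : ℝ => lam * a ^ 2 * |u|) (nhds 0) (nhds 0) := by
        have h : Filter.Tendsto (fun u : ℝ => |u|) (nhds 0) (nhds (0:ℝ)) := by
          simpa using (continuous_abs.tendsto (0:ℝ))
        simpa using h.const_mul (lam * a ^ 2)
      have hev : ∀ᶠ v in nhds (0:ℝ), lam * a ^ 2 * |v| < c :=
        htend.eventually_lt_const hc
      filter_upwards [hev] with v hv
      have hb := roboss_nonneg_bound a lam ha hlam v
      have : lam * a ^ 2 * v ^ 2 = (lam * a ^ 2 * |v|) * |v| := by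
        rw [← sq_abs v]; ring
      calc ‖roboss a lam v‖ = |roboss a lam v| := rfl
        _ ≤ lam * a ^ 2 * v ^ 2 := hb
        _ = (lam * a ^ 2 * |v|) * |v| := this
        _ ≤ c * |v| := mul_le_mul_of_nonneg_right hv.le (abs_nonneg _)
        _ = c * ‖v‖ := rfl
    · -- 0 < u
      have heq : roboss a lam =ᶠ[nhds u]
          (fun u => lam * (1 - (a * u + 1) * Real.exp (-(a * u)))) := by
        filter_upwards [Ioi_mem_nhds hu] with v hv
        have : 0 < v := hv
        simp [roboss, this]
      have : robossDeriv a lam u = lam * a ^ 2 * u * Real.exp (-(a * u)) := by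
        simp [robossDeriv, hu]
      rw [this]
      exact (g_hasDeriv a lam u).congr_of_eventuallyEq heq
  · have heq : robossDeriv a lam =
        fun u => lam * a ^ 2 * (max u 0) * Real.exp (-(a * max u 0)) := by
      funext v
      rcases lt_or_ge 0 v with hv | hv
      · simp [robossDeriv, hv, max_eq_left hv.le]
      · simp [robossDeriv, not_lt.mpr hv, max_eq_right hv]
    rw [heq]
    continuity
end
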